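/- For any integer d ≥ 0 and even N = 2m ≥ 2, if 2^(N-d) divides 2^(2m-1) - (1/2)·C(2m,m), then d ≥ N + 1 - w(N). -/
import Mathlib


/-- Arithmetic core of the PARITY-decision-tree lower bound for MAJORITY:
if 2^(N-d) divides 2^(2m-1) - (1/2)C(2m,m) for N = 2m ≥ 2, then
d ≥ N + 1 - w(N). -/
theorem stmt_8 (d m : ℕ) (hm : 1 ≤ m)
    (h : 2 ^ (2 * m - d) ∣ (2 ^ (2 * m - 1) - Nat.choose (2 * m) m / 2)) :
    2 * m + 1 - (Nat.digits 2 (2 * m)).sum ≤ d := by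
  haveI : Fact (Nat.Prime 2) := ⟨Nat.prime_two⟩
  set w := (Nat.digits 2 (2 * m)).sum with hw
  set C := Nat.choose (2 * m) m with hC
  have h2m : (0:ℕ) < 2 * m := by positivity
  have hdig : Nat.digits 2 (2 * m) = 0 :: Nat.digits 2 m := by
    rw [Nat.digits_def' (by norm_num : (1:ℕ) < 2) h2m]
    simp [Nat.mul_div_cancel_left m two_pos, Nat.mul_mod_right]
  have hws : w = (Nat.digits 2 m).sum := by rw [hw, hdig]; simp
  -- 2-adic valuation of the central binomial coefficient is w
  have hv : padicValNat 2 C = w := by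
    have hkum := sub_one_mul_padicValNat_choose_eq_sub_sum_digits' (p := 2) (k := m) (n := m)
    rw [← two_mul, ← hC] at hkum
    rw [hw, hdig] at *
    simp only [List.sum_cons, zero_add] at hkum ⊢
    omega
  have hC0 : C ≠ 0 := Nat.choose_pos (by omega) |>.ne'
  have h2C : 2 ∣ C := by
    have := Nat.two_dvd_centralBinom_of_one_le (n := m) hm
    rwa [Nat.centralBinom_eq_two_mul_choose] at this
  -- w ≥ 1
  have hw1 : 1 ≤ w := by
    have h1 : (2:ℕ) ^ 1 ∣ C := by simpa using h2C
    have := Nat.Prime.pow_dvd_iff_le_factorization (k := 1) Nat.prime_two hC0 |>.mp h1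
    rwa [Nat.factorization_def C Nat.prime_two, hv] at this
  -- w ≤ 2m - 1
  have hwle : w ≤ 2 * m - 1 := by
    have := Nat.digit_sum_le 2 m
    omega
  -- C < 2^(2m)
  have hClt : C < 2 ^ (2 * m) := by
    rw [← Nat.sum_range_choose (2 * m)]
    exact Finset.single_lt_sum (i := m) (j := 0) (by omega)
      (Finset.mem_range.mpr (by omega)) (Finset.mem_range.mpr (by omega))
      (Nat.choose_pos (by omega)) (fun k _ _ => Nat.zero_le _)
  have hhalf : C / 2 < 2 ^ (2 * m - 1) := by
    rw [Nat.div_lt_iff_lt_mul two_pos, ← pow_succ]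
    have : 2 * m - 1 + 1 = 2 * m := by omega
    rwa [this]
  by_contra hd
  push_neg at hd
  have hdw : d + w ≤ 2 * m := by omega
  -- 2^w divides the difference, hence divides C/2
  have hdvd1 : (2:ℕ) ^ w ∣ 2 ^ (2 * m - 1) - C / 2 :=
    dvd_trans (pow_dvd_pow 2 (by omega : w ≤ 2 * m - d)) h
  have hdvdA : (2:ℕ) ^ w ∣ 2 ^ (2 * m - 1) := pow_dvd_pow 2 hwle
  have hdvd2 : (2:ℕ) ^ w ∣ C / 2 := by
    have := Nat.dvd_sub hdvdA hdvd1
    rwa [Nat.sub_sub_self hhalf.le] at this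
  have hdvd3 : (2:ℕ) ^ (w + 1) ∣ C := by
    rw [pow_succ]
    calc (2:ℕ) ^ w * 2 ∣ (C / 2) * 2 := mul_dvd_mul hdvd2 dvd_rfl
    _ = C := Nat.div_mul_cancel h2C
  have := Nat.Prime.pow_dvd_iff_le_factorization (k := w + 1) Nat.prime_two hC0 |>.mp hdvd3
  rw [Nat.factorization_def C Nat.prime_two, hv] at this
  omega
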